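/- Let L₀^♯ be a nondegenerate quadratic space over ℚ_p (p odd) containing a vector x₀ with [x₀,x₀] ∈ p·ℤ_p^×, and let L₀ := x₀^⊥. The map Λ ↦ Λ ⊕ ℤ_p(p⁻¹x₀) is a bijection from the set of vertex lattices in L₀ onto the set of vertex lattices Λ' in L₀^♯ with p⁻¹x₀ ∈ Λ'; the inverse is Λ' ↦ Λ' ∩ L₀. -/

import Mathlib

set_option linter.unusedSectionVars false
set_option linter.unusedVariables false



/-- The dual lattice of a `ℤ_p`-lattice `Λ` inside the `ℚ_p`-subspace `L` of `W`,
with respect to the bilinear form `[v,w] = polar Q v w`: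
`Λ^∨ = {v ∈ L : [v, Λ] ⊆ ℤ_p}`. -/
noncomputable def dualLattice {p : ℕ} [Fact p.Prime] {W : Type*} [AddCommGroup W]
    [Module ℚ_[p] W] [Module ℤ_[p] W] [IsScalarTower ℤ_[p] ℚ_[p] W]
    (Q : QuadraticForm ℚ_[p] W) (L : Submodule ℚ_[p] W) (Λ : Submodule ℤ_[p] W) :
    Submodule ℤ_[p] W :=
  L.restrictScalars ℤ_[p] ⊓
    ⨅ w ∈ Λ, Submodule.comap
      (((QuadraticMap.polarBilin Q).flip w).restrictScalars ℤ_[p])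
      (1 : Submodule ℤ_[p] ℚ_[p])

/-- `Λ` is a vertex lattice in the subspace `L`: a full `ℤ_p`-lattice in `L` with
`pΛ ⊆ Λ^∨ ⊆ Λ` (duals taken inside `L`). -/
def IsVertexLattice {p : ℕ} [Fact p.Prime] {W : Type*} [AddCommGroup W]
    [Module ℚ_[p] W] [Module ℤ_[p] W] [IsScalarTower ℤ_[p] ℚ_[p] W]
    (Q : QuadraticForm ℚ_[p] W) (L : Submodule ℚ_[p] W) (Λ : Submodule ℤ_[p] W) : Prop :=
  (Λ : Set W) ⊆ (L : Set W) ∧ Submodule.span ℚ_[p] (Λ : Set W) = L ∧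
  (∀ v ∈ Λ, (p : ℤ_[p]) • v ∈ dualLattice Q L Λ) ∧ dualLattice Q L Λ ≤ Λ

/-- The orthogonal complement of `x₀` with respect to the polar form of `Q`. -/
noncomputable def perpSpace {p : ℕ} [Fact p.Prime] {W : Type*} [AddCommGroup W]
    [Module ℚ_[p] W] (Q : QuadraticForm ℚ_[p] W) (x₀ : W) : Submodule ℚ_[p] W :=
  LinearMap.BilinForm.orthogonal (QuadraticMap.polarBilin Q) (Submodule.span ℚ_[p] {x₀})

open QuadraticMap Submodule

section Aux
variable {p : ℕ} [Fact p.Prime] {W : Type*} [AddCommGroup W] [Module ℚ_[p] W]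
  [Module ℤ_[p] W] [IsScalarTower ℤ_[p] ℚ_[p] W] (Q : QuadraticForm ℚ_[p] W)

lemma aux_mem_one {x : ℚ_[p]} : x ∈ (1 : Submodule ℤ_[p] ℚ_[p]) ↔ ‖x‖ ≤ 1 := by
  rw [Submodule.mem_one]
  constructor
  · rintro ⟨z, rfl⟩
    rw [PadicInt.algebraMap_apply]
    exact z.2
  · intro h
    exact ⟨⟨x, h⟩, rfl⟩

lemma aux_mem_dual {L : Submodule ℚ_[p] W} {Λ : Submodule ℤ_[p] W} {v : W} :
    v ∈ dualLattice Q L Λ ↔ v ∈ L ∧ ∀ w ∈ Λ, ‖polar Q v w‖ ≤ 1 := by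
  simp only [dualLattice, Submodule.mem_inf, Submodule.restrictScalars_mem,
    Submodule.mem_iInf, Submodule.mem_comap, LinearMap.restrictScalars_apply,
    LinearMap.flip_apply, polarBilin_apply_apply, aux_mem_one]

lemma aux_mem_perp {x₀ w : W} : w ∈ perpSpace Q x₀ ↔ polar Q x₀ w = 0 := by
  unfold perpSpace
  rw [LinearMap.BilinForm.mem_orthogonal_iff]
  constructor
  · intro h
    simpa [LinearMap.BilinForm.IsOrtho] using h x₀ (Submodule.mem_span_singleton_self x₀)
  · rintro h n hn
    obtain ⟨t, rfl⟩ := Submodule.mem_span_singleton.mp hn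
    simp [LinearMap.BilinForm.IsOrtho, h]

lemma aux_zsmul (z : ℤ_[p]) (w : W) : z • w = ((z : ℚ_[p])) • w := by
  rw [← PadicInt.algebraMap_apply, algebraMap_smul]

end Aux

section Main
variable {p : ℕ} [Fact p.Prime] {W : Type*} [AddCommGroup W] [Module ℚ_[p] W]
  [Module ℤ_[p] W] [IsScalarTower ℤ_[p] ℚ_[p] W] (Q : QuadraticForm ℚ_[p] W)
  (x₀ : W) (u : ℤ_[p]ˣ)

local notation "y" => (p : ℚ_[p])⁻¹ • x₀

lemma pQ_ne : (p : ℚ_[p]) ≠ 0 :=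
  Nat.cast_ne_zero.mpr (Fact.out (p := p.Prime)).ne_zero

lemma norm_uQ : ‖((u : ℤ_[p]) : ℚ_[p])‖ = 1 := by
  rw [PadicInt.padic_norm_e_of_padicInt]; exact PadicInt.norm_units u

lemma norm_uinvQ : ‖(((u⁻¹ : ℤ_[p]ˣ) : ℤ_[p]) : ℚ_[p])‖ = 1 := norm_uQ u⁻¹

lemma uu_mul : (((u⁻¹ : ℤ_[p]ˣ) : ℤ_[p]) : ℚ_[p]) * ((u : ℤ_[p]) : ℚ_[p]) = 1 := by
  rw [← PadicInt.coe_mul, u.inv_mul, PadicInt.coe_one]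

variable (ha : polar Q x₀ x₀ = (p : ℚ_[p]) * ((u : ℤ_[p]) : ℚ_[p]))
include ha

lemma calc_xy : polar Q x₀ y = ((u : ℤ_[p]) : ℚ_[p]) := by
  rw [polar_smul_right, ha, smul_eq_mul, ← mul_assoc, inv_mul_cancel₀ (pQ_ne (p := p)), one_mul]

lemma calc_yy : polar Q y y = (p : ℚ_[p])⁻¹ * ((u : ℤ_[p]) : ℚ_[p]) := by
  rw [polar_smul_left, calc_xy Q x₀ u ha, smul_eq_mul]

omit ha in
lemma perp_polar_y {w : W} (hw : w ∈ perpSpace Q x₀) : polar Q w y = 0 := by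
  rw [polar_smul_right, smul_eq_mul, polar_comm, (aux_mem_perp Q).mp hw, mul_zero]

omit ha in
lemma perp_polar_y' {w : W} (hw : w ∈ perpSpace Q x₀) : polar Q y w = 0 := by
  rw [polar_comm]; exact perp_polar_y Q x₀ hw

omit ha in
noncomputable def projC : W →ₗ[ℚ_[p]] ℚ_[p] :=
  ((((u⁻¹ : ℤ_[p]ˣ) : ℤ_[p]) : ℚ_[p])) • (polarBilin Q x₀)

omit ha in
lemma projC_apply (w : W) :
    projC Q x₀ u w = (((u⁻¹ : ℤ_[p]ˣ) : ℤ_[p]) : ℚ_[p]) * polar Q x₀ w := by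
  simp [projC, smul_eq_mul]

omit ha in
noncomputable def projPerp : W →ₗ[ℚ_[p]] W :=
  LinearMap.id - (projC Q x₀ u).smulRight y

omit ha in
lemma projPerp_apply (w : W) :
    projPerp Q x₀ u w = w - (projC Q x₀ u w) • y := by
  simp [projPerp]

omit ha in
lemma projPerp_decomp (w : W) :
    w = projPerp Q x₀ u w + (projC Q x₀ u w) • y := by
  rw [projPerp_apply]; abel

lemma projPerp_mem (w : W) : projPerp Q x₀ u w ∈ perpSpace Q x₀ := by
  rw [aux_mem_perp, projPerp_apply, polar_sub_right, polar_smul_right,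
    calc_xy Q x₀ u ha, projC_apply, smul_eq_mul]
  rw [show (((u⁻¹ : ℤ_[p]ˣ) : ℤ_[p]) : ℚ_[p]) * polar Q x₀ w * ((u : ℤ_[p]) : ℚ_[p])
      = polar Q x₀ w * ((((u⁻¹ : ℤ_[p]ˣ) : ℤ_[p]) : ℚ_[p]) * ((u : ℤ_[p]) : ℚ_[p])) by ring,
    uu_mul, mul_one, sub_self]

omit ha in
lemma projPerp_eq_self {w : W} (hw : w ∈ perpSpace Q x₀) : projPerp Q x₀ u w = w := by
  rw [projPerp_apply, projC_apply, (aux_mem_perp Q).mp hw, mul_zero, zero_smul, sub_zero]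

end Main

section Big
variable {p : ℕ} [Fact p.Prime] {W : Type*} [AddCommGroup W] [Module ℚ_[p] W]
  [Module ℤ_[p] W] [IsScalarTower ℤ_[p] ℚ_[p] W] (Q : QuadraticForm ℚ_[p] W)
  (x₀ : W) (u : ℤ_[p]ˣ)

local notation "y" => (p : ℚ_[p])⁻¹ • x₀

lemma key_norm {Λ' : Submodule ℤ_[p] W} (hΛ' : IsVertexLattice Q ⊤ Λ')
    (hy : y ∈ Λ') {v : W} (hv : v ∈ Λ') : ‖polar Q x₀ v‖ ≤ 1 := by
  have h1 := ((aux_mem_dual Q).mp (hΛ'.2.2.1 v hv)).2 _ hy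
  rwa [aux_zsmul, polar_smul_left, polar_smul_right, smul_eq_mul, smul_eq_mul,
    PadicInt.coe_natCast, polar_comm, ← mul_assoc, mul_inv_cancel₀ (pQ_ne (p := p)),
    one_mul] at h1

lemma coeff_int {v : W} (h : ‖polar Q x₀ v‖ ≤ 1) :
    ∃ c : ℤ_[p], ((c : ℚ_[p])) = projC Q x₀ u v := by
  refine ⟨⟨projC Q x₀ u v, ?_⟩, rfl⟩
  rw [projC_apply, norm_mul, norm_uinvQ u, one_mul]
  exact h

lemma mem_sup_span {Λ : Submodule ℤ_[p] W} {v : W} :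
    v ∈ Λ ⊔ Submodule.span ℤ_[p] {y} ↔ ∃ v₀ ∈ Λ, ∃ t : ℤ_[p], v = v₀ + t • y := by
  rw [Submodule.mem_sup]
  constructor
  · rintro ⟨a, ha', b, hb, rfl⟩
    obtain ⟨t, rfl⟩ := Submodule.mem_span_singleton.mp hb
    exact ⟨a, ha', t, rfl⟩
  · rintro ⟨v₀, h₀, t, rfl⟩
    exact ⟨v₀, h₀, t • y, Submodule.smul_mem _ t (Submodule.mem_span_singleton_self _), rfl⟩

variable (ha : polar Q x₀ x₀ = (p : ℚ_[p]) * ((u : ℤ_[p]) : ℚ_[p]))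
include ha

lemma splitD {Λ' : Submodule ℤ_[p] W} (hΛ' : IsVertexLattice Q ⊤ Λ') (hy : y ∈ Λ') :
    (Λ' ⊓ (perpSpace Q x₀).restrictScalars ℤ_[p]) ⊔ Submodule.span ℤ_[p] {y} = Λ' := by
  apply le_antisymm
  · refine sup_le inf_le_left ?_
    rw [Submodule.span_le, Set.singleton_subset_iff]; exact hy
  · intro v hv
    obtain ⟨c, hc⟩ := coeff_int Q x₀ u (key_norm Q x₀ hΛ' hy hv)
    refine (mem_sup_span x₀).mpr ⟨v - c • y, ?_, c, by abel⟩
    refine Submodule.mem_inf.mpr ⟨Submodule.sub_mem _ hv (Submodule.smul_mem _ c hy), ?_⟩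
    rw [Submodule.restrictScalars_mem, aux_zsmul, hc]
    have h2 := projPerp_mem Q x₀ u ha v
    rwa [projPerp_apply] at h2

lemma interVertex {Λ' : Submodule ℤ_[p] W} (hΛ' : IsVertexLattice Q ⊤ Λ') (hy : y ∈ Λ') :
    IsVertexLattice Q (perpSpace Q x₀) (Λ' ⊓ (perpSpace Q x₀).restrictScalars ℤ_[p]) := by
  set L₀ := perpSpace Q x₀ with hL₀
  set Λ₀ := Λ' ⊓ L₀.restrictScalars ℤ_[p] with hΛ₀
  have hsubset : (Λ₀ : Set W) ⊆ (L₀ : Set W) := fun v hv => hv.2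
  have hΛ₀Λ' : Λ₀ ≤ Λ' := inf_le_left
  refine ⟨hsubset, ?_, ?_, ?_⟩
  · apply le_antisymm
    · rw [Submodule.span_le]; exact hsubset
    · intro w hw
      have hw' : w ∈ Submodule.span ℚ_[p] (Λ' : Set W) := by rw [hΛ'.2.1]; trivial
      have h2 : projPerp Q x₀ u w ∈
          Submodule.map (projPerp Q x₀ u) (Submodule.span ℚ_[p] (Λ' : Set W)) :=
        Submodule.mem_map_of_mem hw'
      rw [Submodule.map_span] at h2
      have h3 : (projPerp Q x₀ u) '' (Λ' : Set W) ⊆ (Λ₀ : Set W) := by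
        rintro _ ⟨v, hv, rfl⟩
        obtain ⟨c, hc⟩ := coeff_int Q x₀ u (key_norm Q x₀ hΛ' hy hv)
        refine Submodule.mem_inf.mpr ⟨?_, ?_⟩
        · rw [projPerp_apply, ← hc, ← aux_zsmul]
          exact Submodule.sub_mem _ hv (Submodule.smul_mem _ c hy)
        · rw [Submodule.restrictScalars_mem]
          exact projPerp_mem Q x₀ u ha v
      rw [projPerp_eq_self Q x₀ u hw] at h2
      exact Submodule.span_mono h3 h2
  · intro v hv
    rw [aux_mem_dual]
    have h1 := (aux_mem_dual Q).mp (hΛ'.2.2.1 v (hΛ₀Λ' hv))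
    refine ⟨?_, fun w hw => h1.2 w (hΛ₀Λ' hw)⟩
    rw [aux_zsmul]
    exact Submodule.smul_mem _ _ hv.2
  · intro v hvd
    obtain ⟨hvL, hbd⟩ := (aux_mem_dual Q).mp hvd
    have hvΛ' : v ∈ Λ' := by
      apply hΛ'.2.2.2
      rw [aux_mem_dual]
      refine ⟨trivial, fun w hw => ?_⟩
      rw [← splitD Q x₀ u ha hΛ' hy] at hw
      obtain ⟨w₀, hw₀, t, rfl⟩ := (mem_sup_span x₀).mp hw
      rw [polar_add_right, aux_zsmul, polar_smul_right, perp_polar_y Q x₀ hvL,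
        smul_zero, add_zero]
      exact hbd w₀ hw₀
    exact Submodule.mem_inf.mpr ⟨hvΛ', (Submodule.restrictScalars_mem ..).mpr hvL⟩

lemma interEq {Λ : Submodule ℤ_[p] W} (hsub : (Λ : Set W) ⊆ (perpSpace Q x₀ : Set W)) :
    (Λ ⊔ Submodule.span ℤ_[p] {y}) ⊓ (perpSpace Q x₀).restrictScalars ℤ_[p] = Λ := by
  apply le_antisymm
  · intro v hv
    obtain ⟨hv1, hv2⟩ := Submodule.mem_inf.mp hv
    obtain ⟨v₀, h₀, t, rfl⟩ := (mem_sup_span x₀).mp hv1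
    rw [Submodule.restrictScalars_mem] at hv2
    have h₀' : v₀ ∈ perpSpace Q x₀ := hsub h₀
    have hty : t • y ∈ perpSpace Q x₀ := by
      have h4 := Submodule.sub_mem _ hv2 h₀'
      simpa using h4
    have ht : ((t : ℚ_[p])) * ((u : ℤ_[p]) : ℚ_[p]) = 0 := by
      have h := (aux_mem_perp Q).mp hty
      rwa [aux_zsmul, polar_smul_right, calc_xy Q x₀ u ha, smul_eq_mul] at h
    have ht0 : (t : ℚ_[p]) = 0 := by
      rcases mul_eq_zero.mp ht with h | h
      · exact h
      · exact absurd h (PadicInt.coe_ne_zero.mpr u.ne_zero)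
    have hty0 : t • y = 0 := by rw [aux_zsmul, ht0, zero_smul]
    rwa [hty0, add_zero]
  · exact le_inf le_sup_left fun v hv => (Submodule.restrictScalars_mem ..).mpr (hsub hv)

lemma forwardVertex {Λ : Submodule ℤ_[p] W} (hΛ : IsVertexLattice Q (perpSpace Q x₀) Λ) :
    IsVertexLattice Q ⊤ (Λ ⊔ Submodule.span ℤ_[p] {y}) := by
  obtain ⟨hsub, hspan, hpd, hdl⟩ := hΛ
  have hy' : y ∈ Λ ⊔ Submodule.span ℤ_[p] {y} :=
    Submodule.mem_sup_right (Submodule.mem_span_singleton_self _)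
  refine ⟨fun _ _ => trivial, ?_, ?_, ?_⟩
  · rw [eq_top_iff]
    intro w _
    have h1 : projPerp Q x₀ u w ∈
        Submodule.span ℚ_[p] ((Λ ⊔ Submodule.span ℤ_[p] {y} : Submodule ℤ_[p] W) : Set W) :=
      Submodule.span_mono (fun a ha' => (le_sup_left : Λ ≤ _) ha')
        (by rw [hspan]; exact projPerp_mem Q x₀ u ha w)
    have h2 : projC Q x₀ u w • y ∈
        Submodule.span ℚ_[p] ((Λ ⊔ Submodule.span ℤ_[p] {y} : Submodule ℤ_[p] W) : Set W) :=
      Submodule.smul_mem _ _ (Submodule.subset_span hy')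
    have h3 := Submodule.add_mem _ h1 h2
    rwa [← projPerp_decomp] at h3
  · intro v hv
    rw [aux_mem_dual]
    refine ⟨trivial, fun w hw => ?_⟩
    obtain ⟨v₀, hv₀, s, rfl⟩ := (mem_sup_span x₀).mp hv
    obtain ⟨w₀, hw₀, t, rfl⟩ := (mem_sup_span x₀).mp hw
    have e1 : polar Q v₀ (t • y) = 0 := by
      rw [aux_zsmul, polar_smul_right, perp_polar_y Q x₀ (hsub hv₀), smul_zero]
    have e2 : polar Q (s • y) w₀ = 0 := by
      rw [aux_zsmul, polar_smul_left, perp_polar_y' Q x₀ (hsub hw₀), smul_zero]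
    have e3 : polar Q (s • y) (t • y)
        = (s : ℚ_[p]) * ((t : ℚ_[p]) * ((p : ℚ_[p])⁻¹ * ((u : ℤ_[p]) : ℚ_[p]))) := by
      rw [aux_zsmul, aux_zsmul, polar_smul_left, polar_smul_right, calc_yy Q x₀ u ha,
        smul_eq_mul, smul_eq_mul]
    rw [aux_zsmul, polar_smul_left, smul_eq_mul, PadicInt.coe_natCast,
      polar_add_left, polar_add_right, polar_add_right, e1, e2, e3, add_zero, zero_add,
      mul_add]
    refine le_trans (Padic.nonarchimedean _ _) (max_le ?_ ?_)
    · have h := ((aux_mem_dual Q).mp (hpd v₀ hv₀)).2 w₀ hw₀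
      rwa [aux_zsmul, polar_smul_left, smul_eq_mul, PadicInt.coe_natCast] at h
    · have e4 : (p : ℚ_[p]) * ((s : ℚ_[p]) * ((t : ℚ_[p]) * ((p : ℚ_[p])⁻¹ * ((u : ℤ_[p]) : ℚ_[p]))))
          = (s : ℚ_[p]) * (t : ℚ_[p]) * ((u : ℤ_[p]) : ℚ_[p]) := by
        rw [show (p : ℚ_[p]) * ((s : ℚ_[p]) * ((t : ℚ_[p]) * ((p : ℚ_[p])⁻¹ * ((u : ℤ_[p]) : ℚ_[p]))))
            = ((p : ℚ_[p]) * (p : ℚ_[p])⁻¹) * ((s : ℚ_[p]) * (t : ℚ_[p]) * ((u : ℤ_[p]) : ℚ_[p])) by ring,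
          mul_inv_cancel₀ (pQ_ne (p := p)), one_mul]
      rw [e4, norm_mul, norm_mul, norm_uQ, mul_one]
      have hs : ‖(s : ℚ_[p])‖ ≤ 1 := by
        rw [PadicInt.padic_norm_e_of_padicInt]; exact s.norm_le_one
      have ht : ‖(t : ℚ_[p])‖ ≤ 1 := by
        rw [PadicInt.padic_norm_e_of_padicInt]; exact t.norm_le_one
      exact mul_le_one₀ hs (norm_nonneg _) ht
  · intro v hvd
    obtain ⟨-, hbd⟩ := (aux_mem_dual Q).mp hvd
    have hnorm : ‖polar Q x₀ v‖ ≤ 1 := by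
      have h := hbd _ hy'
      rw [polar_smul_right, smul_eq_mul, polar_comm, norm_mul] at h
      have hpinv : ‖(p : ℚ_[p])⁻¹‖ = (p : ℝ) := by
        rw [norm_inv, Padic.norm_p, inv_inv]
      rw [hpinv] at h
      have hp1 : (1 : ℝ) ≤ (p : ℝ) :=
        Nat.one_le_cast.mpr (Fact.out (p := p.Prime)).one_lt.le
      nlinarith [norm_nonneg (polar Q x₀ v)]
    have hproj : projPerp Q x₀ u v ∈ Λ := by
      apply hdl
      rw [aux_mem_dual]
      refine ⟨projPerp_mem Q x₀ u ha v, fun w hw => ?_⟩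
      rw [projPerp_apply, polar_sub_left, polar_smul_left,
        perp_polar_y' Q x₀ (hsub hw), smul_zero, sub_zero]
      exact hbd w ((le_sup_left : Λ ≤ _) hw)
    obtain ⟨c, hc⟩ := coeff_int Q x₀ u hnorm
    have hdec : v = projPerp Q x₀ u v + c • y := by
      rw [aux_zsmul, hc]; exact projPerp_decomp Q x₀ u v
    have hmem : projPerp Q x₀ u v + c • y ∈ Λ ⊔ Submodule.span ℤ_[p] {y} :=
      Submodule.add_mem _ ((le_sup_left : Λ ≤ _) hproj) (Submodule.smul_mem _ _ hy')
    rwa [← hdec] at hmem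

end Big

/-- Let `W = L₀^♯` be a nondegenerate quadratic space over `ℚ_p` (`p` odd),
`x₀ ∈ W` with `[x₀,x₀] ∈ p·ℤ_p^×`, and `L₀ = x₀^⊥`.  The map `Λ ↦ Λ ⊕ ℤ_p(p⁻¹x₀)` is a
bijection from the set of vertex lattices in `L₀` onto the set of vertex lattices `Λ'` in
`L₀^♯` with `p⁻¹x₀ ∈ Λ'`, with inverse `Λ' ↦ Λ' ∩ L₀`. -/
theorem stmt_6 (p : ℕ) [Fact p.Prime] (hp : p ≠ 2)
    (W : Type*) [AddCommGroup W] [Module ℚ_[p] W] [Module ℤ_[p] W]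
    [IsScalarTower ℤ_[p] ℚ_[p] W] [FiniteDimensional ℚ_[p] W]
    (Q : QuadraticForm ℚ_[p] W) (hQ : (QuadraticMap.polarBilin Q).Nondegenerate)
    (x₀ : W)
    (hx₀ : ∃ u : ℤ_[p]ˣ, QuadraticMap.polar Q x₀ x₀ = (p : ℚ_[p]) * ((u : ℤ_[p]) : ℚ_[p])) :
    Set.BijOn
      (fun Λ : Submodule ℤ_[p] W => Λ ⊔ Submodule.span ℤ_[p] {(p : ℚ_[p])⁻¹ • x₀})
      {Λ | IsVertexLattice Q (perpSpace Q x₀) Λ}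
      {Λ' | IsVertexLattice Q ⊤ Λ' ∧ (p : ℚ_[p])⁻¹ • x₀ ∈ Λ'} ∧
    ∀ Λ' : Submodule ℤ_[p] W, IsVertexLattice Q ⊤ Λ' → (p : ℚ_[p])⁻¹ • x₀ ∈ Λ' →
      IsVertexLattice Q (perpSpace Q x₀)
        (Λ' ⊓ (perpSpace Q x₀).restrictScalars ℤ_[p]) ∧
      (Λ' ⊓ (perpSpace Q x₀).restrictScalars ℤ_[p]) ⊔
        Submodule.span ℤ_[p] {(p : ℚ_[p])⁻¹ • x₀} = Λ' := by
  obtain ⟨u, ha⟩ := hx₀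
  constructor
  · refine ⟨?_, ?_, ?_⟩
    · intro Λ hΛ
      exact ⟨forwardVertex Q x₀ u ha hΛ,
        Submodule.mem_sup_right (Submodule.mem_span_singleton_self _)⟩
    · intro Λ₁ h₁ Λ₂ h₂ heq
      have e1 := interEq Q x₀ u ha (Λ := Λ₁) h₁.1
      have e2 := interEq Q x₀ u ha (Λ := Λ₂) h₂.1
      dsimp only at heq
      rw [← e1, ← e2, heq]
    · intro Λ' hΛ'
      exact ⟨Λ' ⊓ (perpSpace Q x₀).restrictScalars ℤ_[p],
        interVertex Q x₀ u ha hΛ'.1 hΛ'.2, splitD Q x₀ u ha hΛ'.1 hΛ'.2⟩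
  · intro Λ' h1 h2
    exact ⟨interVertex Q x₀ u ha h1 h2, splitD Q x₀ u ha h1 h2⟩
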